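/- The map φ_X : HH^*(A,A) → HH^*(B,B) induced by an invertible bimodule complex X, defined by φ_X(f) = u[i] ∘ (Y ⊗^L_A f ⊗^L_A X) ∘ u^{−1} for f : A → A[i], is an isomorphism of graded k-algebras for the cup product (which corresponds to graded composition in the derived bimodule category). -/
import Mathlib


/-!
STATEMENT 9: The map `φ_X : HH^*(A,A) → HH^*(B,B)` induced by an invertible
bimodule complex `X` is an isomorphism of graded `k`-algebras for the cup
product, which corresponds to graded composition in the derived bimodule
category.

We formalize the situation abstractly: `C` plays the role of `D(A^op ⊗ A)`,
`D` of `D(B^op ⊗ B)`, the equivalence `F : C ⥤ D` commuting with shifts plays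
the role of `Y ⊗^L_A (-) ⊗^L_A X`, `a : C` is the bimodule `A`, `b : D` the
bimodule `B`, and `u : F a ≅ b` the isomorphism `Y ⊗^L_A X ≅ B`.  Then
`HH^i(A,A) = Hom(a, a⟦i⟧)`, the cup product of `f : a ⟶ a⟦j⟧` and
`g : a ⟶ a⟦i⟧` is `f[i] ∘ g`, and `φ(f) = u[i] ∘ F(f) ∘ u⁻¹` (using the
commutation of `F` with shifts).  The claim: each `φ_i` is bijective and `φ`
is multiplicative for the cup product.
-/

open CategoryTheory

theorem derived_equivalence_induces_cup_product_isomorphism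
    {C D : Type*} [Category C] [Category D] [HasShift C ℤ] [HasShift D ℤ]
    (F : C ⥤ D) [F.IsEquivalence] [F.CommShift ℤ] (a : C) (b : D)
    (u : F.obj a ≅ b) :
    (∀ i : ℤ, Function.Bijective
      (fun f : a ⟶ (shiftFunctor C i).obj a =>
        u.inv ≫ F.map f ≫ (F.commShiftIso i).hom.app a ≫ (shiftFunctor D i).map u.hom)) ∧
    (∀ (i j : ℤ) (f : a ⟶ (shiftFunctor C j).obj a) (g : a ⟶ (shiftFunctor C i).obj a),
      (u.inv ≫ F.map (g ≫ (shiftFunctor C i).map f ≫ (shiftFunctorAdd C j i).inv.app a)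
          ≫ (F.commShiftIso (j + i)).hom.app a ≫ (shiftFunctor D (j + i)).map u.hom)
        = (u.inv ≫ F.map g ≫ (F.commShiftIso i).hom.app a ≫ (shiftFunctor D i).map u.hom)
          ≫ (shiftFunctor D i).map
              (u.inv ≫ F.map f ≫ (F.commShiftIso j).hom.app a ≫ (shiftFunctor D j).map u.hom)
          ≫ (shiftFunctorAdd D j i).inv.app b) := by
  constructor
  · intro i
    have ff := Functor.FullyFaithful.ofFullyFaithful F
    let β : F.obj ((shiftFunctor C i).obj a) ≅ (shiftFunctor D i).obj b :=
      (F.commShiftIso i).app a ≪≫ (shiftFunctor D i).mapIso u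
    have he : (fun f : a ⟶ (shiftFunctor C i).obj a =>
        u.inv ≫ F.map f ≫ (F.commShiftIso i).hom.app a ≫ (shiftFunctor D i).map u.hom)
        = ⇑((ff.homEquiv).trans (u.homCongr β)) := by
      funext f
      simp [β, Iso.homCongr, Functor.FullyFaithful.homEquiv]
    rw [he]
    exact Equiv.bijective _
  · intro i j f g
    rw [F.commShiftIso_add, Functor.CommShift.isoAdd_hom_app]
    simp only [Functor.map_comp, Category.assoc, Functor.comp_obj]
    simp only [← Functor.map_comp_assoc, Category.assoc, Iso.hom_inv_id, Category.comp_id, Functor.commShiftIso_hom_naturality, Functor.commShiftIso_hom_naturality_assoc, Iso.inv_hom_id_app_assoc]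
    simp only [Category.assoc, Iso.inv_hom_id_app, Iso.hom_inv_id_assoc, Category.comp_id,
      Functor.map_comp, Functor.commShiftIso_hom_naturality_assoc]
    congr 2
    erw [← NatTrans.naturality]
    simp [Functor.commShiftIso_hom_naturality_assoc]
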